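/- Let p ≥ 2, let e ≥ 2, and let r₁, r₂, …, r_e be natural numbers with r_e ≥ 2. If Σ_{j=1}^{e} r_j · p^(e-j) · (p^(j-1) − 1) = 2·p^(e-1) − 2, then r_j = 0 for all 2 ≤ j ≤ e−1 and r_e = 2 (while r₁ is arbitrary). -/

import Mathlib

theorem cyclic_signature_equation (p e : ℕ) (hp : 2 ≤ p) (he : 2 ≤ e)
    (r : ℕ → ℕ) (hre : 2 ≤ r e)
    (h : ∑ j ∈ Finset.Icc 1 e, r j * p ^ (e - j) * (p ^ (j - 1) - 1) = 2 * p ^ (e - 1) - 2) :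
    (∀ j, 2 ≤ j → j ≤ e - 1 → r j = 0) ∧ r e = 2 := by
  obtain ⟨e', rfl⟩ : ∃ e', e = e' + 1 := ⟨e - 1, by omega⟩
  rw [Finset.sum_Icc_succ_top (by omega)] at h
  simp only [Nat.add_sub_cancel] at h ⊢
  have hp1 : 2 ≤ p ^ e' := le_trans hp (Nat.le_self_pow (by omega) p)
  simp only [Nat.sub_self, pow_zero, mul_one] at h
  have hge : 2 * (p ^ e' - 1) ≤ r (e'+1) * (p ^ e' - 1) :=
    Nat.mul_le_mul_right _ hre
  have hsum0 : ∑ j ∈ Finset.Icc 1 e', r j * p ^ (e'+1 - j) * (p ^ (j - 1) - 1) = 0 := by omega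
  have hre2 : r (e'+1) = 2 := by
    have heq : r (e'+1) * (p ^ e' - 1) = 2 * (p ^ e' - 1) := by omega
    exact Nat.eq_of_mul_eq_mul_right (by omega) heq
  refine ⟨?_, hre2⟩
  intro j hj2 hje
  rw [Finset.sum_eq_zero_iff] at hsum0
  have hz := hsum0 j (Finset.mem_Icc.mpr ⟨by omega, by omega⟩)
  have hpj : 0 < p ^ (e'+1 - j) := Nat.pow_pos (by omega)
  have hpj1 : 2 ≤ p ^ (j-1) := le_trans hp (Nat.le_self_pow (by omega) p)
  rcases Nat.mul_eq_zero.mp hz with h' | h'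
  · rcases Nat.mul_eq_zero.mp h' with h'' | h''
    · exact h''
    · omega
  · omega
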